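/- Let n₁, n₂ ≥ 1 and let (M₁₁, M₁₂, M₂₂) be a simple object of the cuspidal matrix problem MP_cp(n₁,n₂). Then the block M₁₂ has full rank: rank(M₁₂) = min(n₁,n₂). -/

import Mathlib

open Matrix

lemma exists_ker_vec {m n : ℕ} (A : Matrix (Fin m) (Fin n) ℂ) (h : A.rank < n) :
    ∃ v : Fin n → ℂ, v ≠ 0 ∧ A.mulVec v = 0 := by
  by_contra hc
  push_neg at hc
  have hinj : Function.Injective A.mulVecLin := by
    rw [← LinearMap.ker_eq_bot, LinearMap.ker_eq_bot']
    intro v hv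
    by_contra hv0
    exact (hc v hv0) hv
  have hr := LinearMap.finrank_range_of_inj hinj
  rw [Module.finrank_fintype_fun_eq_card, Fintype.card_fin] at hr
  rw [Matrix.rank, hr] at h
  exact lt_irrefl _ h

/-- in the cuspidal matrix problem `MP_cp(n₁,n₂)`, the block `M₁₂` of a
simple object has full rank `min n₁ n₂`. -/
theorem cuspidal_simple_implies_block_full_rank (n₁ n₂ : ℕ) (h₁ : 1 ≤ n₁) (h₂ : 1 ≤ n₂)
    (M₁₁ : Matrix (Fin n₁) (Fin n₁) ℂ) (M₁₂ : Matrix (Fin n₁) (Fin n₂) ℂ)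
    (M₂₂ : Matrix (Fin n₂) (Fin n₂) ℂ)
    (hsimple : ∀ (S₁₁ : Matrix (Fin n₁) (Fin n₁) ℂ) (S₂₁ : Matrix (Fin n₂) (Fin n₁) ℂ)
      (S₂₂ : Matrix (Fin n₂) (Fin n₂) ℂ),
      S₁₁ * M₁₁ = M₁₁ * S₁₁ + M₁₂ * S₂₁ →
      S₁₁ * M₁₂ = M₁₂ * S₂₂ →
      S₂₁ * M₁₂ + S₂₂ * M₂₂ = M₂₂ * S₂₂ →
        ∃ c : ℂ, S₁₁ = c • (1 : Matrix (Fin n₁) (Fin n₁) ℂ) ∧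
          S₂₂ = c • (1 : Matrix (Fin n₂) (Fin n₂) ℂ) ∧ S₂₁ = 0) :
    M₁₂.rank = min n₁ n₂ := by
  have hle : M₁₂.rank ≤ min n₁ n₂ := by
    refine le_min ?_ ?_
    · simpa using M₁₂.rank_le_card_height
    · simpa using M₁₂.rank_le_card_width
  rcases lt_or_eq_of_le hle with hlt | heq
  · exfalso
    -- right kernel vector
    obtain ⟨v, hv, hvker⟩ := exists_ker_vec M₁₂ (lt_of_lt_of_le hlt (min_le_right _ _))
    -- left kernel vector
    have hrt : M₁₂ᵀ.rank < n₁ := by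
      rw [Matrix.rank_transpose]
      exact lt_of_lt_of_le hlt (min_le_left _ _)
    obtain ⟨u, hu, huker⟩ := exists_ker_vec M₁₂ᵀ hrt
    set S₂₁ : Matrix (Fin n₂) (Fin n₁) ℂ := fun i j => v i * u j with hS
    have hMS : M₁₂ * S₂₁ = 0 := by
      ext i j
      have : M₁₂.mulVec v i = 0 := by rw [hvker]; rfl
      simp only [Matrix.mul_apply, Matrix.zero_apply]; simp only [hS]
      rw [show (∑ k, M₁₂ i k * (v k * u j)) = (∑ k, M₁₂ i k * v k) * u j by
        rw [Finset.sum_mul]; congr 1; ext k; ring]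
      rw [show (∑ k, M₁₂ i k * v k) = M₁₂.mulVec v i from rfl, this, zero_mul]
    have hSM : S₂₁ * M₁₂ = 0 := by
      ext i j
      have : M₁₂ᵀ.mulVec u j = 0 := by rw [huker]; rfl
      simp only [Matrix.mul_apply, Matrix.zero_apply]; simp only [hS]
      rw [show (∑ k, v i * u k * M₁₂ k j) = v i * (∑ k, u k * M₁₂ k j) by
        rw [Finset.mul_sum]; congr 1; ext k; ring]
      rw [show (∑ k, u k * M₁₂ k j) = M₁₂ᵀ.mulVec u j by
        simp [Matrix.mulVec, dotProduct, Matrix.transpose_apply, mul_comm], this, mul_zero]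
    obtain ⟨c, hc1, hc2, hc3⟩ := hsimple 0 S₂₁ 0 (by simp [hMS]) (by simp) (by simp [hSM])
    obtain ⟨i, hi⟩ := Function.ne_iff.mp hv
    obtain ⟨j, hj⟩ := Function.ne_iff.mp hu
    have : S₂₁ i j = 0 := by rw [hc3]; rfl
    rw [hS] at this
    exact (mul_ne_zero hi hj) this
  · exact heq
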